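/- Characterization of CO-definability: Let K be a nonempty class of recursive causal teams over σ. Then K is definable by a CO[σ]-formula (i.e. K = {T : T ⊨^c φ} for some CO[σ]-formula φ) if and only if K is flat and closed under equivalence, where K is flat iff for every causal team (T⁻,F): (T⁻,F) ∈ K iff ({s},F) ∈ K for every s ∈ T⁻; and K is closed under equivalence iff T ∈ K and T ≈ T′ imply T′ ∈ K. -/

import Mathlib

open scoped Classical
set_option linter.unusedSectionVars false

noncomputable section

/-- Assignments of values to variables. -/
abbrev Asg (V : Type) (Val : V → Type) : Type := (v : V) → Val v

/-- A recursive system of functions over the signature `(V, Val)`: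
each endogenous variable `v ∈ En` has a parent set `pa v` and a function `fn v`
computing its value from the values of its parents; recursiveness says that the
induced causal graph is acyclic. -/
structure Sys (V : Type) (Val : V → Type) : Type where
  En : Finset V
  pa : V → Finset V
  fn : (v : V) → ((w : V) → w ∈ pa v → Val w) → Val v
  recursive : ∀ x : V, ¬ Relation.TransGen (fun a b => b ∈ En ∧ a ∈ pa b) x x

variable {V : Type} [Fintype V] [DecidableEq V] [Nonempty V]
  {Val : V → Type} [∀ v, Fintype (Val v)] [∀ v, DecidableEq (Val v)] [∀ v, Nonempty (Val v)]

namespace CausalTeam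

/-- The edge relation of the causal graph of a system of functions. -/
@[reducible] def Edge (F : Sys V Val) (a b : V) : Prop := b ∈ F.En ∧ a ∈ F.pa b

theorem wfEdge (F : Sys V Val) : WellFounded (Edge F) := by
  have h2 : WellFounded (Relation.TransGen (Edge F)) := by
    have hirr : IsIrrefl V (Relation.TransGen (Edge F)) := ⟨F.recursive⟩
    have htr : IsTrans V (Relation.TransGen (Edge F)) :=
      ⟨fun _ _ _ h h' => Relation.TransGen.trans h h'⟩
    exact Finite.wellFounded_of_trans_of_irrefl _
  exact Subrelation.wf (fun h => Relation.TransGen.single h) h2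

/-- An assignment is compatible with a system of functions if every endogenous
variable takes the value prescribed by its function. -/
def Compat (F : Sys V Val) (s : Asg V Val) : Prop :=
  ∀ v ∈ F.En, s v = F.fn v (fun w _ => s w)

/-- The variables occurring in a conjunction of equations `𝐗 = 𝐱`. -/
def ikeys (I : List ((v : V) × Val v)) : List V := I.map Sigma.fst

/-- A conjunction of equations is consistent if it contains no pair `X = x`, `X = x'`
with distinct values `x ≠ x'`. -/
def IConsistent (I : List ((v : V) × Val v)) : Prop :=
  ∀ p ∈ I, ∀ q ∈ I, p.1 = q.1 → p = q

/-- Look up the (first) value assigned to a variable by a conjunction of equations. -/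
def ilookup : List ((v : V) × Val v) → (v : V) → Option (Val v)
  | [], _ => none
  | p :: I, v => if h : p.1 = v then some (h ▸ p.2) else ilookup I v

/-- The intervened system of functions `F_{𝐗=𝐱}`: the restriction of `F` to `En(F) ∖ 𝐗`. -/
def doSys (F : Sys V Val) (I : List ((v : V) × Val v)) : Sys V Val where
  En := F.En.filter (fun v => v ∉ ikeys I)
  pa := F.pa
  fn := F.fn
  recursive := by
    intro x hx
    refine F.recursive x ?_
    have key : ∀ a b, Relation.TransGen (fun a b => b ∈ F.En.filter (fun v => v ∉ ikeys I) ∧ a ∈ F.pa b) a b →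
        Relation.TransGen (fun a b => b ∈ F.En ∧ a ∈ F.pa b) a b := by
      intro a b h
      induction h with
      | single hab => exact Relation.TransGen.single ⟨(Finset.mem_filter.mp hab.1).1, hab.2⟩
      | tail _ hab ih => exact Relation.TransGen.tail ih ⟨(Finset.mem_filter.mp hab.1).1, hab.2⟩
    exact key x x hx

/-- The intervened assignment `s_{𝐗=𝐱}`: variables in `𝐗` get the prescribed values,
exogenous variables outside `𝐗` keep their values, and endogenous variables outside `𝐗`
are recomputed (recursively) by their functions. -/
def doAsg (F : Sys V Val) (I : List ((v : V) × Val v)) (s : Asg V Val) : Asg V Val :=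
  (wfEdge F).fix (C := fun v => Val v) fun v ih =>
    match ilookup I v with
    | some x => x
    | none => if h : v ∈ F.En then F.fn v (fun w hw => ih w ⟨h, hw⟩) else s v

/-- Formulas of the languages CO[σ], CO⩗[σ] and COD[σ]:
equations `X = x`, dependence atoms `=(𝐗;Y)`, negation, conjunction,
tensor disjunction `∨`, intuitionistic disjunction `⩗`, and counterfactuals `𝐗=𝐱 □→ φ`. -/
inductive Fml (V : Type) (Val : V → Type) : Type where
  | eq : (v : V) → Val v → Fml V Val
  | dep : List V → V → Fml V Val
  | neg : Fml V Val → Fml V Val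
  | and : Fml V Val → Fml V Val → Fml V Val
  | or : Fml V Val → Fml V Val → Fml V Val
  | ior : Fml V Val → Fml V Val → Fml V Val
  | cf : List ((v : V) × Val v) → Fml V Val → Fml V Val

/-- CO[σ]-formulas: equations, closed under ¬, ∧, ∨ and counterfactuals. -/
inductive IsCO : Fml V Val → Prop where
  | eq (v : V) (x : Val v) : IsCO (Fml.eq v x)
  | neg {φ} : IsCO φ → IsCO (Fml.neg φ)
  | and {φ ψ} : IsCO φ → IsCO ψ → IsCO (Fml.and φ ψ)
  | or {φ ψ} : IsCO φ → IsCO ψ → IsCO (Fml.or φ ψ)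
  | cf {φ} (I : List ((v : V) × Val v)) : IsCO φ → IsCO (Fml.cf I φ)

/-- CO⩗[σ]-formulas: additionally closed under ⩗; negation applies to CO-formulas only. -/
inductive IsCOV : Fml V Val → Prop where
  | eq (v : V) (x : Val v) : IsCOV (Fml.eq v x)
  | neg {φ} : IsCO φ → IsCOV (Fml.neg φ)
  | and {φ ψ} : IsCOV φ → IsCOV ψ → IsCOV (Fml.and φ ψ)
  | or {φ ψ} : IsCOV φ → IsCOV ψ → IsCOV (Fml.or φ ψ)
  | ior {φ ψ} : IsCOV φ → IsCOV ψ → IsCOV (Fml.ior φ ψ)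
  | cf {φ} (I : List ((v : V) × Val v)) : IsCOV φ → IsCOV (Fml.cf I φ)

/-- COD[σ]-formulas: additionally allow dependence atoms; negation applies to
CO-formulas only. -/
inductive IsCOD : Fml V Val → Prop where
  | eq (v : V) (x : Val v) : IsCOD (Fml.eq v x)
  | dep (X : List V) (Y : V) : IsCOD (Fml.dep X Y)
  | neg {φ} : IsCO φ → IsCOD (Fml.neg φ)
  | and {φ ψ} : IsCOD φ → IsCOD ψ → IsCOD (Fml.and φ ψ)
  | or {φ ψ} : IsCOD φ → IsCOD ψ → IsCOD (Fml.or φ ψ)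
  | cf {φ} (I : List ((v : V) × Val v)) : IsCOD φ → IsCOD (Fml.cf I φ)

/-- Satisfaction over causal teams `(Tm, F)` (the causal team semantics `⊨^c`). -/
def satC : Set (Asg V Val) → Sys V Val → Fml V Val → Prop
  | Tm, _, Fml.eq v x => ∀ s ∈ Tm, s v = x
  | Tm, _, Fml.dep X Y => ∀ s ∈ Tm, ∀ t ∈ Tm, (∀ w ∈ X, s w = t w) → s Y = t Y
  | Tm, F, Fml.neg φ => ∀ s ∈ Tm, ¬ satC {s} F φ
  | Tm, F, Fml.and φ ψ => satC Tm F φ ∧ satC Tm F ψ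
  | Tm, F, Fml.or φ ψ => ∃ T1 T2 : Set (Asg V Val), T1 ∪ T2 = Tm ∧ satC T1 F φ ∧ satC T2 F ψ
  | Tm, F, Fml.ior φ ψ => satC Tm F φ ∨ satC Tm F ψ
  | Tm, F, Fml.cf I φ => IConsistent I → satC (doAsg F I '' Tm) (doSys F I) φ

/-- Satisfaction over generalized causal teams (the semantics `⊨^g`). -/
def satG : Set (Asg V Val × Sys V Val) → Fml V Val → Prop
  | T, Fml.eq v x => ∀ p ∈ T, p.1 v = x
  | T, Fml.dep X Y => ∀ p ∈ T, ∀ q ∈ T, (∀ w ∈ X, p.1 w = q.1 w) → p.1 Y = q.1 Y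
  | T, Fml.neg φ => ∀ p ∈ T, ¬ satG {p} φ
  | T, Fml.and φ ψ => satG T φ ∧ satG T ψ
  | T, Fml.or φ ψ => ∃ T1 T2 : Set (Asg V Val × Sys V Val), T1 ∪ T2 = T ∧ satG T1 φ ∧ satG T2 ψ
  | T, Fml.ior φ ψ => satG T φ ∨ satG T ψ
  | T, Fml.cf I φ => IConsistent I →
      satG ((fun p : Asg V Val × Sys V Val => (doAsg p.2 I p.1, doSys p.2 I)) '' T) φ

/-- A generalized causal team: a set of pairs `(s, F)` with `s` compatible with `F`. -/
def GTOk (T : Set (Asg V Val × Sys V Val)) : Prop := ∀ p ∈ T, Compat p.2 p.1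

/-- The falsum `⊥`, an abbreviation for `X=x ∧ ¬(X=x)`. -/
def fBot : Fml V Val :=
  Fml.and (Fml.eq (Classical.arbitrary V) (Classical.arbitrary (Val (Classical.arbitrary V))))
    (Fml.neg (Fml.eq (Classical.arbitrary V) (Classical.arbitrary (Val (Classical.arbitrary V)))))

/-- A canonical tautology. -/
def fTop : Fml V Val := Fml.neg fBot

/-- Finite conjunction of a list of formulas. -/
def bigAnd : List (Fml V Val) → Fml V Val
  | [] => fTop
  | [φ] => φ
  | φ :: ψ :: rest => Fml.and φ (bigAnd (ψ :: rest))

/-- Finite tensor disjunction of a list of formulas. -/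
def bigOr : List (Fml V Val) → Fml V Val
  | [] => fBot
  | [φ] => φ
  | φ :: ψ :: rest => Fml.or φ (bigOr (ψ :: rest))

/-- Finite intuitionistic disjunction of a list of formulas. -/
def bigIor : List (Fml V Val) → Fml V Val
  | [] => fBot
  | [φ] => φ
  | φ :: ψ :: rest => Fml.ior φ (bigIor (ψ :: rest))

/-- The conjunction of equations describing the restriction of the assignment `t`
to the set `S` of variables. -/
def eqList (S : Finset V) (t : Asg V Val) : List ((v : V) × Val v) :=
  S.toList.map (fun w => ⟨w, t w⟩)

/-- The list of all assignments over the signature. -/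
def allAsg : List (Asg V Val) := (Finset.univ : Finset (Asg V Val)).toList

/-- `η(v)`: for every tuple of values for the variables other than `v`, intervening
with those values forces `v` to take the value computed by `F.fn v` from the parents. -/
def eta (F : Sys V Val) (v : V) : Fml V Val :=
  bigAnd (allAsg.map (fun t =>
    Fml.cf (eqList (Finset.univ.erase v) t) (Fml.eq v (F.fn v (fun w _ => t w)))))

/-- `ξ(v)`: the value of `v` is unaffected by interventions on all other variables. -/
def xi (v : V) : Fml V Val :=
  bigAnd ((Finset.univ : Finset (Val v)).toList.map (fun x =>
    bigAnd (allAsg.map (fun t =>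
      Fml.or (Fml.neg (Fml.eq v x))
        (Fml.cf (eqList (Finset.univ.erase v) t) (Fml.eq v x))))))

/-- `Cn(F)`: the endogenous variables of `F` governed by a constant function. -/
def Cn (F : Sys V Val) : Finset V :=
  F.En.filter (fun v => ∃ c : Val v, ∀ p, F.fn v p = c)

/-- The non-constant endogenous variables `En(F) ∖ Cn(F)`. -/
def strictEn (F : Sys V Val) : Finset V := F.En \ Cn F

/-- `F_v ∼ G_v`: equivalence of the two functions for `v` up to dummy arguments. -/
def SimFn (F G : Sys V Val) (v : V) : Prop :=
  ∀ (x : (w : V) → w ∈ F.pa v ∩ G.pa v → Val w)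
    (y : (w : V) → w ∈ F.pa v \ G.pa v → Val w)
    (z : (w : V) → w ∈ G.pa v \ F.pa v → Val w),
    F.fn v (fun w hw =>
      if h : w ∈ G.pa v then x w (Finset.mem_inter.mpr ⟨hw, h⟩)
      else y w (Finset.mem_sdiff.mpr ⟨hw, h⟩)) =
    G.fn v (fun w hw =>
      if h : w ∈ F.pa v then x w (Finset.mem_inter.mpr ⟨h, hw⟩)
      else z w (Finset.mem_sdiff.mpr ⟨hw, h⟩))

/-- `F ∼ G`: equivalence of systems of functions up to dummy arguments. -/
def Sim (F G : Sys V Val) : Prop :=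
  strictEn F = strictEn G ∧ ∀ v ∈ strictEn F, SimFn F G v

/-- The CO[σ]-formula `Φ^F` characterizing the function component `F` up to `∼`. -/
def Phi (F : Sys V Val) : Fml V Val :=
  Fml.and (bigAnd (F.En.toList.map (fun v => eta F v)))
    (bigAnd ((((Finset.univ : Finset V) \ F.En) ∪ Cn F).toList.map (fun v => xi v)))

/-- The CO[σ]-formula `Θ^A`: the team component is included in `A`. -/
def Theta (A : Finset (Asg V Val)) : Fml V Val :=
  bigOr (A.toList.map (fun s =>
    bigAnd ((Finset.univ : Finset V).toList.map (fun v => Fml.eq v (s v)))))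

/-- `χ₁`: all variables are constant in the team. -/
def chi1 : Fml V Val :=
  bigAnd ((Finset.univ : Finset V).toList.map (fun v => Fml.dep [] v))

/-- `χ_k`: the team has at most `k` elements. -/
def chi : ℕ → Fml V Val
  | 0 => fBot
  | 1 => chi1
  | (k+2) => Fml.or chi1 (chi (k+1))

/-! ### Auxiliary lemmas -/

theorem not_mem_pa_self {F : Sys V Val} {v : V} (h : v ∈ F.En) : v ∉ F.pa v := by
  intro hpa
  exact F.recursive v (Relation.TransGen.single ⟨h, hpa⟩)

theorem doAsg_spec (F : Sys V Val) (I : List ((v : V) × Val v)) (s : Asg V Val) (v : V) :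
    doAsg F I s v = (match ilookup I v with
      | some x => x
      | none => if h : v ∈ F.En then F.fn v (fun w _ => doAsg F I s w) else s v) := by
  unfold doAsg
  rw [WellFounded.fix_eq]

theorem doAsg_of_some {F : Sys V Val} {I : List ((v : V) × Val v)} {s : Asg V Val} {v : V}
    {x : Val v} (h : ilookup I v = some x) : doAsg F I s v = x := by
  rw [doAsg_spec, h]

theorem doAsg_of_none_en {F : Sys V Val} {I : List ((v : V) × Val v)} {s : Asg V Val} {v : V}
    (h : ilookup I v = none) (hv : v ∈ F.En) :
    doAsg F I s v = F.fn v (fun w _ => doAsg F I s w) := by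
  rw [doAsg_spec, h]
  simp [hv]

theorem doAsg_of_none_nen {F : Sys V Val} {I : List ((v : V) × Val v)} {s : Asg V Val} {v : V}
    (h : ilookup I v = none) (hv : v ∉ F.En) : doAsg F I s v = s v := by
  rw [doAsg_spec, h]
  simp [hv]

theorem ilookup_eq_none_iff {I : List ((v : V) × Val v)} {v : V} :
    ilookup I v = none ↔ v ∉ ikeys I := by
  induction I with
  | nil => simp [ilookup, ikeys]
  | cons p I ih =>
    show (if h : p.1 = v then some (h ▸ p.2) else ilookup I v) = none ↔ _
    by_cases h : p.1 = v
    · subst h; simp [ikeys]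
    · rw [dif_neg h]
      have : v ∈ ikeys (p :: I) ↔ v = p.1 ∨ v ∈ ikeys I := by
        simp [ikeys]
      rw [ih, this]
      constructor
      · intro hv hor; rcases hor with hh | hh
        · exact h hh.symm
        · exact hv hh
      · intro hv hh; exact hv (Or.inr hh)

theorem compat_doAsg (F : Sys V Val) (I : List ((v : V) × Val v)) (s : Asg V Val) :
    Compat (doSys F I) (doAsg F I s) := by
  intro v hv
  simp only [doSys, Finset.mem_filter] at hv
  exact doAsg_of_none_en (ilookup_eq_none_iff.mpr hv.2) hv.1

theorem satC_empty {φ : Fml V Val} (h : IsCO φ) (F : Sys V Val) : satC ∅ F φ := by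
  induction h generalizing F with
  | eq v x => intro s hs; exact absurd hs (Set.notMem_empty s)
  | neg h ih => intro s hs; exact absurd hs (Set.notMem_empty s)
  | and h1 h2 ih1 ih2 => exact ⟨ih1 F, ih2 F⟩
  | or h1 h2 ih1 ih2 => exact ⟨∅, ∅, by simp, ih1 F, ih2 F⟩
  | cf I h ih =>
    intro _
    simp only [Set.image_empty]
    exact ih _

theorem satC_flat {φ : Fml V Val} (h : IsCO φ) (Tm : Set (Asg V Val)) (F : Sys V Val) :
    satC Tm F φ ↔ ∀ s ∈ Tm, satC {s} F φ := by
  induction h generalizing Tm F with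
  | eq v x =>
    show (∀ s ∈ Tm, s v = x) ↔ ∀ s ∈ Tm, ∀ u ∈ ({s} : Set (Asg V Val)), u v = x
    simp
  | @neg φ h ih =>
    show (∀ s ∈ Tm, ¬ satC {s} F φ) ↔
      ∀ s ∈ Tm, ∀ u ∈ ({s} : Set (Asg V Val)), ¬ satC {u} F φ
    constructor
    · intro h s hs u hu
      have hu' : u = s := hu
      rw [hu']; exact h s hs
    · intro h s hs; exact h s hs s rfl
  | @and φ ψ h1 h2 ih1 ih2 =>
    show satC Tm F φ ∧ satC Tm F ψ ↔ ∀ s ∈ Tm, satC {s} F φ ∧ satC {s} F ψ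
    rw [ih1 Tm F, ih2 Tm F]
    constructor
    · rintro ⟨a, b⟩ s hs; exact ⟨a s hs, b s hs⟩
    · intro h; exact ⟨fun s hs => (h s hs).1, fun s hs => (h s hs).2⟩
  | @or φ ψ h1 h2 ih1 ih2 =>
    constructor
    · rintro ⟨T1, T2, hU, hT1, hT2⟩ s hs
      rw [← hU] at hs
      rcases hs with hs | hs
      · exact ⟨{s}, ∅, by simp, (ih1 T1 F).mp hT1 s hs, satC_empty h2 F⟩
      · exact ⟨∅, {s}, by simp, satC_empty h1 F, (ih2 T2 F).mp hT2 s hs⟩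
    · intro h
      refine ⟨{s ∈ Tm | satC {s} F φ}, {s ∈ Tm | ¬ satC {s} F φ}, ?_, ?_, ?_⟩
      · ext s; by_cases hs : satC {s} F φ <;> simp [hs]
      · exact (ih1 _ F).mpr (fun s hs => hs.2)
      · refine (ih2 _ F).mpr (fun s hs => ?_)
        obtain ⟨S1, S2, hU, hS1, hS2⟩ := h s hs.1
        have hsub1 : S1 ⊆ {s} := hU ▸ Set.subset_union_left
        have hsub2 : S2 ⊆ {s} := hU ▸ Set.subset_union_right
        have : s ∈ S1 ∪ S2 := hU ▸ rfl
        rcases this with hm | hm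
        · exact absurd (Set.Subset.antisymm hsub1 (Set.singleton_subset_iff.mpr hm) ▸ hS1) hs.2
        · exact Set.Subset.antisymm hsub2 (Set.singleton_subset_iff.mpr hm) ▸ hS2
  | @cf φ I h ih =>
    show (IConsistent I → _) ↔ _
    constructor
    · intro hI s hs hc
      have := (ih _ _).mp (hI hc) (doAsg F I s) ⟨s, hs, rfl⟩
      simpa using this
    · intro h' hc
      refine (ih _ _).mpr ?_
      rintro u ⟨s, hs, rfl⟩
      have := h' s hs hc
      simpa using this

theorem mem_Cn_iff {F : Sys V Val} {v : V} :
    v ∈ Cn F ↔ v ∈ F.En ∧ ∃ c : Val v, ∀ p, F.fn v p = c := by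
  simp [Cn]

theorem mem_strictEn_iff {F : Sys V Val} {v : V} :
    v ∈ strictEn F ↔ v ∈ F.En ∧ v ∉ Cn F := by
  simp [strictEn]

theorem doAsg_sim {F G : Sys V Val} (h : Sim F G) {s : Asg V Val}
    (hsF : Compat F s) (hsG : Compat G s) (I : List ((v : V) × Val v)) :
    doAsg F I s = doAsg G I s := by
  funext v
  induction v using (wfEdge F).induction with
  | _ v ih =>
  rcases hl : ilookup I v with _ | x
  · -- no intervention on v
    by_cases hF : v ∈ F.En
    · by_cases hCn : v ∈ Cn F
      · -- constant in F
        obtain ⟨c, hc⟩ := (mem_Cn_iff.mp hCn).2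
        have hsv : s v = c := by rw [hsF v hF, hc]
        rw [doAsg_of_none_en hl hF, hc]
        by_cases hG : v ∈ G.En
        · have hvG : v ∉ strictEn G := by
            rw [← h.1, mem_strictEn_iff]
            intro hcon; exact hcon.2 hCn
          have hCnG : v ∈ Cn G := by
            rw [mem_strictEn_iff] at hvG
            push_neg at hvG
            exact hvG hG
          obtain ⟨c', hc'⟩ := (mem_Cn_iff.mp hCnG).2
          have hsv' : s v = c' := by rw [hsG v hG, hc']
          rw [doAsg_of_none_en hl hG, hc', ← hsv', hsv]
        · rw [doAsg_of_none_nen hl hG, hsv]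
      · -- v ∈ strictEn F
        have hst : v ∈ strictEn F := mem_strictEn_iff.mpr ⟨hF, hCn⟩
        have hstG : v ∈ strictEn G := h.1 ▸ hst
        have hG : v ∈ G.En := (mem_strictEn_iff.mp hstG).1
        rw [doAsg_of_none_en hl hF, doAsg_of_none_en hl hG]
        have hsim := h.2 v hst
        have key := hsim (fun w hw => doAsg F I s w) (fun w _ => doAsg F I s w)
          (fun w _ => doAsg G I s w)
        have e1 : F.fn v (fun w hw =>
            if h' : w ∈ G.pa v then doAsg F I s w else doAsg F I s w) =
            F.fn v (fun w _ => doAsg F I s w) := by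
          congr 1
          funext w hw
          split <;> rfl
        have e2 : G.fn v (fun w hw =>
            if h' : w ∈ F.pa v then doAsg F I s w else doAsg G I s w) =
            G.fn v (fun w _ => doAsg G I s w) := by
          congr 1
          funext w hw
          by_cases h' : w ∈ F.pa v
          · rw [dif_pos h']; exact ih w ⟨hF, h'⟩
          · rw [dif_neg h']
        rw [e1, e2] at key
        exact key
    · -- v exogenous in F
      rw [doAsg_of_none_nen hl hF]
      by_cases hG : v ∈ G.En
      · have hvG : v ∉ strictEn G := by
          rw [← h.1, mem_strictEn_iff]
          intro hcon; exact hF hcon.1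
        have hCnG : v ∈ Cn G := by
          rw [mem_strictEn_iff] at hvG
          push_neg at hvG
          exact hvG hG
        obtain ⟨c', hc'⟩ := (mem_Cn_iff.mp hCnG).2
        have hsv' : s v = c' := by rw [hsG v hG, hc']
        rw [doAsg_of_none_en hl hG, hc', hsv']
      · rw [doAsg_of_none_nen hl hG]
  · rw [doAsg_of_some hl, doAsg_of_some hl]

theorem strictEn_doSys (F : Sys V Val) (I : List ((v : V) × Val v)) :
    strictEn (doSys F I) = (strictEn F).filter (fun v => v ∉ ikeys I) := by
  ext v
  rw [Finset.mem_filter, mem_strictEn_iff, mem_strictEn_iff, mem_Cn_iff, mem_Cn_iff]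
  show (v ∈ F.En.filter (fun v => v ∉ ikeys I) ∧
    ¬(v ∈ F.En.filter (fun v => v ∉ ikeys I) ∧ ∃ c : Val v, ∀ p, F.fn v p = c)) ↔ _
  rw [Finset.mem_filter]
  tauto

theorem sim_doSys {F G : Sys V Val} (h : Sim F G) (I : List ((v : V) × Val v)) :
    Sim (doSys F I) (doSys G I) := by
  constructor
  · rw [strictEn_doSys, strictEn_doSys, h.1]
  · intro v hv
    rw [strictEn_doSys, Finset.mem_filter] at hv
    exact h.2 v hv.1

theorem satC_sim {φ : Fml V Val} (h : IsCO φ) :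
    ∀ (F G : Sys V Val) (Tm : Set (Asg V Val)), Sim F G →
    (∀ s ∈ Tm, Compat F s ∧ Compat G s) → (satC Tm F φ ↔ satC Tm G φ) := by
  induction h with
  | eq v x => intro F G Tm _ _; exact Iff.rfl
  | @neg φ h ih =>
    intro F G Tm hsim hcomp
    show (∀ s ∈ Tm, ¬ satC {s} F φ) ↔ ∀ s ∈ Tm, ¬ satC {s} G φ
    refine forall₂_congr (fun s hs => ?_)
    rw [ih F G {s} hsim (fun u hu => by
      have : u = s := hu
      rw [this]; exact hcomp s hs)]
  | @and φ ψ h1 h2 ih1 ih2 =>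
    intro F G Tm hsim hcomp
    show satC Tm F φ ∧ satC Tm F ψ ↔ satC Tm G φ ∧ satC Tm G ψ
    rw [ih1 F G Tm hsim hcomp, ih2 F G Tm hsim hcomp]
  | @or φ ψ h1 h2 ih1 ih2 =>
    intro F G Tm hsim hcomp
    show (∃ T1 T2, T1 ∪ T2 = Tm ∧ _ ∧ _) ↔ (∃ T1 T2, T1 ∪ T2 = Tm ∧ _ ∧ _)
    refine exists_congr (fun T1 => exists_congr (fun T2 => ?_))
    constructor
    · rintro ⟨hU, hφ, hψ⟩
      have h1' : ∀ s ∈ T1, Compat F s ∧ Compat G s :=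
        fun s hs => hcomp s (hU ▸ Set.mem_union_left T2 hs)
      have h2' : ∀ s ∈ T2, Compat F s ∧ Compat G s :=
        fun s hs => hcomp s (hU ▸ Set.mem_union_right T1 hs)
      exact ⟨hU, (ih1 F G T1 hsim h1').mp hφ, (ih2 F G T2 hsim h2').mp hψ⟩
    · rintro ⟨hU, hφ, hψ⟩
      have h1' : ∀ s ∈ T1, Compat F s ∧ Compat G s :=
        fun s hs => hcomp s (hU ▸ Set.mem_union_left T2 hs)
      have h2' : ∀ s ∈ T2, Compat F s ∧ Compat G s :=
        fun s hs => hcomp s (hU ▸ Set.mem_union_right T1 hs)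
      exact ⟨hU, (ih1 F G T1 hsim h1').mpr hφ, (ih2 F G T2 hsim h2').mpr hψ⟩
  | @cf φ I h ih =>
    intro F G Tm hsim hcomp
    show (IConsistent I → _) ↔ (IConsistent I → _)
    refine imp_congr_right (fun _ => ?_)
    have himg : doAsg F I '' Tm = doAsg G I '' Tm := by
      apply Set.image_congr
      intro s hs
      rw [doAsg_sim hsim (hcomp s hs).1 (hcomp s hs).2 I]
    rw [himg]
    refine ih (doSys F I) (doSys G I) _ (sim_doSys hsim I) ?_
    rintro u ⟨s, hs, rfl⟩
    constructor
    · rw [← doAsg_sim hsim (hcomp s hs).1 (hcomp s hs).2 I]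
      exact compat_doAsg F I s
    · exact compat_doAsg G I s

theorem isCO_fBot : IsCO (fBot : Fml V Val) :=
  IsCO.and (IsCO.eq _ _) (IsCO.neg (IsCO.eq _ _))

theorem isCO_fTop : IsCO (fTop : Fml V Val) := IsCO.neg isCO_fBot

theorem isCO_bigAnd {L : List (Fml V Val)} (h : ∀ ψ ∈ L, IsCO ψ) : IsCO (bigAnd L) := by
  induction L with
  | nil => exact isCO_fTop
  | cons a l ih =>
    cases l with
    | nil => exact h a (List.mem_cons_self)
    | cons b l' =>
      exact IsCO.and (h a (by simp)) (ih (fun ψ hψ => h ψ (List.mem_cons_of_mem a hψ)))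

theorem isCO_bigOr {L : List (Fml V Val)} (h : ∀ ψ ∈ L, IsCO ψ) : IsCO (bigOr L) := by
  induction L with
  | nil => exact isCO_fBot
  | cons a l ih =>
    cases l with
    | nil => exact h a (List.mem_cons_self)
    | cons b l' =>
      exact IsCO.or (h a (by simp)) (ih (fun ψ hψ => h ψ (List.mem_cons_of_mem a hψ)))

theorem not_satC_fBot_singleton (s : Asg V Val) (F : Sys V Val) : ¬ satC {s} F fBot := by
  rintro ⟨h1, h2⟩
  exact h2 s rfl h1

theorem satC_fTop (Tm : Set (Asg V Val)) (F : Sys V Val) : satC Tm F fTop := by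
  intro s _
  exact not_satC_fBot_singleton s F

theorem satC_bigAnd {L : List (Fml V Val)} {Tm : Set (Asg V Val)} {F : Sys V Val} :
    satC Tm F (bigAnd L) ↔ ∀ ψ ∈ L, satC Tm F ψ := by
  induction L with
  | nil => simp [bigAnd, satC_fTop]
  | cons a l ih =>
    cases l with
    | nil => simp [bigAnd]
    | cons b l' =>
      show satC Tm F a ∧ satC Tm F (bigAnd (b :: l')) ↔ _
      rw [ih]
      simp

theorem satC_or_singleton {φ ψ : Fml V Val} (h1 : IsCO φ) (h2 : IsCO ψ)
    {s : Asg V Val} {F : Sys V Val} :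
    satC {s} F (Fml.or φ ψ) ↔ satC {s} F φ ∨ satC {s} F ψ := by
  constructor
  · rintro ⟨T1, T2, hU, hT1, hT2⟩
    have hm : s ∈ T1 ∪ T2 := hU ▸ rfl
    have hsub1 : T1 ⊆ {s} := hU ▸ Set.subset_union_left
    have hsub2 : T2 ⊆ {s} := hU ▸ Set.subset_union_right
    rcases hm with hm | hm
    · exact Or.inl (Set.Subset.antisymm hsub1 (Set.singleton_subset_iff.mpr hm) ▸ hT1)
    · exact Or.inr (Set.Subset.antisymm hsub2 (Set.singleton_subset_iff.mpr hm) ▸ hT2)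
  · rintro (h | h)
    · exact ⟨{s}, ∅, by simp, h, satC_empty h2 F⟩
    · exact ⟨∅, {s}, by simp, satC_empty h1 F, h⟩

theorem satC_bigOr_singleton {L : List (Fml V Val)} (hL : ∀ ψ ∈ L, IsCO ψ)
    {s : Asg V Val} {F : Sys V Val} :
    satC {s} F (bigOr L) ↔ ∃ ψ ∈ L, satC {s} F ψ := by
  induction L with
  | nil => simp [bigOr, not_satC_fBot_singleton s F]
  | cons a l ih =>
    cases l with
    | nil => simp [bigOr]
    | cons b l' =>
      show satC {s} F (Fml.or a (bigOr (b :: l'))) ↔ _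
      rw [satC_or_singleton (hL a (by simp))
        (isCO_bigOr (fun ψ hψ => hL ψ (List.mem_cons_of_mem a hψ))),
        ih (fun ψ hψ => hL ψ (List.mem_cons_of_mem a hψ))]
      simp

theorem mem_allAsg (t : Asg V Val) : t ∈ (allAsg : List (Asg V Val)) :=
  Finset.mem_toList.mpr (Finset.mem_univ t)

theorem ilookup_cons (p : (v : V) × Val v) (I : List ((v : V) × Val v)) (v : V) :
    ilookup (p :: I) v = if h : p.1 = v then some (h ▸ p.2) else ilookup I v := rfl

theorem ilookup_map_list (t : Asg V Val) (l : List V) (v : V) :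
    ilookup (l.map (fun w => (⟨w, t w⟩ : (v : V) × Val v))) v =
      if v ∈ l then some (t v) else none := by
  induction l with
  | nil => simp [ilookup]
  | cons a l ih =>
    rw [List.map_cons, ilookup_cons]
    by_cases h : a = v
    · subst h; simp
    · rw [dif_neg h, ih]
      by_cases hv : v ∈ l
      · simp [hv]
      · have : v ∉ a :: l := by
          simp only [List.mem_cons]
          rintro (rfl | hc)
          · exact h rfl
          · exact hv hc
        simp [hv, this]

theorem ilookup_eqList (S : Finset V) (t : Asg V Val) (v : V) :
    ilookup (eqList S t) v = if v ∈ S then some (t v) else none := by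
  rw [eqList, ilookup_map_list]
  simp

theorem iconsistent_eqList (S : Finset V) (t : Asg V Val) : IConsistent (eqList S t) := by
  intro p hp q hq hpq
  simp only [eqList, List.mem_map] at hp hq
  obtain ⟨a, _, rfl⟩ := hp
  obtain ⟨b, _, rfl⟩ := hq
  simp only at hpq
  subst hpq
  rfl

theorem doAsg_eqList_ne {v₀ : V} (F : Sys V Val) (t s : Asg V Val) {w : V} (h : w ≠ v₀) :
    doAsg F (eqList (Finset.univ.erase v₀) t) s w = t w := by
  apply doAsg_of_some
  rw [ilookup_eqList]
  simp [h]

theorem doAsg_eqList_self_en {v₀ : V} {F : Sys V Val} (t s : Asg V Val) (h : v₀ ∈ F.En) :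
    doAsg F (eqList (Finset.univ.erase v₀) t) s v₀ = F.fn v₀ (fun w _ => t w) := by
  have hl : ilookup (eqList (Finset.univ.erase v₀) t) v₀ = none := by
    rw [ilookup_eqList]; simp
  rw [doAsg_of_none_en hl h]
  congr 1
  funext w hw
  exact doAsg_eqList_ne F t s (fun hh : w = v₀ => not_mem_pa_self h (hh ▸ hw))

theorem doAsg_eqList_self_nen {v₀ : V} {F : Sys V Val} (t s : Asg V Val) (h : v₀ ∉ F.En) :
    doAsg F (eqList (Finset.univ.erase v₀) t) s v₀ = s v₀ := by
  have hl : ilookup (eqList (Finset.univ.erase v₀) t) v₀ = none := by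
    rw [ilookup_eqList]; simp
  exact doAsg_of_none_nen hl h

theorem satC_eq_singleton {s : Asg V Val} {F : Sys V Val} {v : V} {x : Val v} :
    satC {s} F (Fml.eq v x) ↔ s v = x := by
  show (∀ u ∈ ({s} : Set (Asg V Val)), u v = x) ↔ _
  simp

theorem satC_neg_eq_singleton {s : Asg V Val} {F : Sys V Val} {v : V} {x : Val v} :
    satC {s} F (Fml.neg (Fml.eq v x)) ↔ s v ≠ x := by
  show (∀ u ∈ ({s} : Set (Asg V Val)), ¬ satC {u} F (Fml.eq v x)) ↔ _
  simp only [Set.mem_singleton_iff, forall_eq]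
  rw [satC_eq_singleton]

theorem satC_cf_eq_singleton {s : Asg V Val} {F : Sys V Val} {I : List ((v : V) × Val v)}
    (hI : IConsistent I) {v : V} {c : Val v} :
    satC {s} F (Fml.cf I (Fml.eq v c)) ↔ doAsg F I s v = c := by
  show (IConsistent I → ∀ u ∈ doAsg F I '' {s}, u v = c) ↔ _
  simp [hI]

theorem isCO_eta (F₀ : Sys V Val) (v : V) : IsCO (eta F₀ v) := by
  refine isCO_bigAnd ?_
  intro ψ hψ
  simp only [List.mem_map] at hψ
  obtain ⟨t, _, rfl⟩ := hψ
  exact IsCO.cf _ (IsCO.eq _ _)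

theorem isCO_xi (v : V) : IsCO (xi v : Fml V Val) := by
  refine isCO_bigAnd ?_
  intro ψ hψ
  simp only [List.mem_map] at hψ
  obtain ⟨x, _, rfl⟩ := hψ
  refine isCO_bigAnd ?_
  intro ψ hψ
  simp only [List.mem_map] at hψ
  obtain ⟨t, _, rfl⟩ := hψ
  exact IsCO.or (IsCO.neg (IsCO.eq _ _)) (IsCO.cf _ (IsCO.eq _ _))

theorem isCO_Phi (F₀ : Sys V Val) : IsCO (Phi F₀) := by
  refine IsCO.and (isCO_bigAnd ?_) (isCO_bigAnd ?_) <;>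
    · intro ψ hψ
      simp only [List.mem_map] at hψ
      obtain ⟨v, _, rfl⟩ := hψ
      first
        | exact isCO_eta _ _
        | exact isCO_xi _

theorem satC_eta_iff {s : Asg V Val} {F F₀ : Sys V Val} {v : V} :
    satC {s} F (eta F₀ v) ↔
      ∀ t : Asg V Val, doAsg F (eqList (Finset.univ.erase v) t) s v =
        F₀.fn v (fun w _ => t w) := by
  rw [eta, satC_bigAnd]
  constructor
  · intro h t
    have := h _ (List.mem_map.mpr ⟨t, mem_allAsg t, rfl⟩)
    exact (satC_cf_eq_singleton (iconsistent_eqList _ t)).mp this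
  · intro h ψ hψ
    simp only [List.mem_map] at hψ
    obtain ⟨t, _, rfl⟩ := hψ
    exact (satC_cf_eq_singleton (iconsistent_eqList _ t)).mpr (h t)

theorem satC_xi_iff {s : Asg V Val} {F : Sys V Val} {v : V} :
    satC {s} F (xi v) ↔
      ∀ t : Asg V Val, doAsg F (eqList (Finset.univ.erase v) t) s v = s v := by
  rw [xi, satC_bigAnd]
  constructor
  · intro h t
    have h1 := h _ (List.mem_map.mpr ⟨s v, Finset.mem_toList.mpr (Finset.mem_univ _), rfl⟩)
    rw [satC_bigAnd] at h1
    have h2 := h1 _ (List.mem_map.mpr ⟨t, mem_allAsg t, rfl⟩)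
    rcases (satC_or_singleton (IsCO.neg (IsCO.eq _ _)) (IsCO.cf _ (IsCO.eq _ _))).mp h2 with
      hc | hc
    · exact absurd rfl (satC_neg_eq_singleton.mp hc)
    · exact (satC_cf_eq_singleton (iconsistent_eqList _ t)).mp hc
  · intro h ψ hψ
    simp only [List.mem_map] at hψ
    obtain ⟨x, _, rfl⟩ := hψ
    rw [satC_bigAnd]
    intro ψ hψ
    simp only [List.mem_map] at hψ
    obtain ⟨t, _, rfl⟩ := hψ
    rw [satC_or_singleton (IsCO.neg (IsCO.eq _ _)) (IsCO.cf _ (IsCO.eq _ _))]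
    by_cases hx : s v = x
    · exact Or.inr ((satC_cf_eq_singleton (iconsistent_eqList _ t)).mpr ((h t).trans hx))
    · exact Or.inl (satC_neg_eq_singleton.mpr hx)

/-- Extend a partial assignment on the parents of `v` to a total assignment. -/
theorem exists_total_ext {F : Sys V Val} {v : V} (p : (w : V) → w ∈ F.pa v → Val w) :
    ∃ t : Asg V Val, (fun w (_ : w ∈ F.pa v) => t w) = p :=
  ⟨fun w => if h : w ∈ F.pa v then p w h else Classical.arbitrary _, by
    funext w hw
    simp [hw]⟩

theorem const_of_total {F : Sys V Val} {v : V} {c : Val v}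
    (h : ∀ t : Asg V Val, F.fn v (fun w _ => t w) = c) :
    ∀ p, F.fn v p = c := by
  intro p
  obtain ⟨t, ht⟩ := exists_total_ext p
  rw [← ht]
  exact h t

theorem satC_Phi_iff {s : Asg V Val} {F F₀ : Sys V Val} :
    satC {s} F (Phi F₀) ↔ (∀ v ∈ F₀.En, satC {s} F (eta F₀ v)) ∧
      ∀ v ∈ Finset.univ \ F₀.En ∪ Cn F₀, satC {s} F (xi v) := by
  constructor
  · intro h
    obtain ⟨h1, h2⟩ := h
    refine ⟨fun v hv => ?_, fun v hv => ?_⟩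
    · exact satC_bigAnd.mp h1 _ (List.mem_map.mpr ⟨v, Finset.mem_toList.mpr hv, rfl⟩)
    · exact satC_bigAnd.mp h2 _ (List.mem_map.mpr ⟨v, Finset.mem_toList.mpr hv, rfl⟩)
  · rintro ⟨h1, h2⟩
    refine ⟨satC_bigAnd.mpr ?_, satC_bigAnd.mpr ?_⟩
    · intro ψ hψ
      simp only [List.mem_map, Finset.mem_toList] at hψ
      obtain ⟨v, hv, rfl⟩ := hψ
      exact h1 v hv
    · intro ψ hψ
      simp only [List.mem_map, Finset.mem_toList] at hψ
      obtain ⟨v, hv, rfl⟩ := hψ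
      exact h2 v hv

theorem satC_Phi_self {F : Sys V Val} {s : Asg V Val} (hs : Compat F s) :
    satC {s} F (Phi F) := by
  rw [satC_Phi_iff]
  constructor
  · intro v hv
    rw [satC_eta_iff]
    intro t
    exact doAsg_eqList_self_en t s hv
  · intro v hv
    rw [satC_xi_iff]
    intro t
    rcases Finset.mem_union.mp hv with hv | hv
    · exact doAsg_eqList_self_nen t s (Finset.mem_sdiff.mp hv).2
    · obtain ⟨hEn, c, hc⟩ := mem_Cn_iff.mp hv
      rw [doAsg_eqList_self_en t s hEn, hc, hs v hEn, hc]

theorem simFn_of_total {F₀ F : Sys V Val} {v : V}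
    (hstar : ∀ t : Asg V Val, F.fn v (fun w _ => t w) = F₀.fn v (fun w _ => t w)) :
    SimFn F₀ F v := by
  intro x y z
  let t : Asg V Val := fun w =>
    if h : w ∈ F₀.pa v ∩ F.pa v then x w h
    else if h : w ∈ F₀.pa v \ F.pa v then y w h
    else if h : w ∈ F.pa v \ F₀.pa v then z w h
    else Classical.arbitrary _
  have hA : ∀ (w) (hw : w ∈ F₀.pa v), t w =
      if h : w ∈ F.pa v then x w (Finset.mem_inter.mpr ⟨hw, h⟩)
      else y w (Finset.mem_sdiff.mpr ⟨hw, h⟩) := by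
    intro w hw
    by_cases h : w ∈ F.pa v
    · rw [dif_pos h]
      show dite _ _ _ = _
      rw [dif_pos (Finset.mem_inter.mpr ⟨hw, h⟩)]
    · rw [dif_neg h]
      show dite _ _ _ = _
      rw [dif_neg (by simp [h] : ¬ w ∈ F₀.pa v ∩ F.pa v),
        dif_pos (Finset.mem_sdiff.mpr ⟨hw, h⟩)]
  have hB : ∀ (w) (hw : w ∈ F.pa v), t w =
      if h : w ∈ F₀.pa v then x w (Finset.mem_inter.mpr ⟨h, hw⟩)
      else z w (Finset.mem_sdiff.mpr ⟨hw, h⟩) := by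
    intro w hw
    by_cases h : w ∈ F₀.pa v
    · rw [dif_pos h]
      show dite _ _ _ = _
      rw [dif_pos (Finset.mem_inter.mpr ⟨h, hw⟩)]
    · rw [dif_neg h]
      show dite _ _ _ = _
      rw [dif_neg (by simp [h] : ¬ w ∈ F₀.pa v ∩ F.pa v),
        dif_neg (by simp [h] : ¬ w ∈ F₀.pa v \ F.pa v),
        dif_pos (Finset.mem_sdiff.mpr ⟨hw, h⟩)]
  have e1 : F₀.fn v (fun w hw =>
      if h : w ∈ F.pa v then x w (Finset.mem_inter.mpr ⟨hw, h⟩)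
      else y w (Finset.mem_sdiff.mpr ⟨hw, h⟩)) = F₀.fn v (fun w _ => t w) := by
    congr 1
    funext w hw
    exact (hA w hw).symm
  have e2 : F.fn v (fun w hw =>
      if h : w ∈ F₀.pa v then x w (Finset.mem_inter.mpr ⟨h, hw⟩)
      else z w (Finset.mem_sdiff.mpr ⟨hw, h⟩)) = F.fn v (fun w _ => t w) := by
    congr 1
    funext w hw
    exact (hB w hw).symm
  exact e1.trans ((hstar t).symm.trans e2.symm)

theorem satC_Phi_sim {F F₀ : Sys V Val} {s : Asg V Val} (hs : Compat F s)
    (h : satC {s} F (Phi F₀)) : Sim F₀ F := by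
  rw [satC_Phi_iff] at h
  obtain ⟨H1, H2⟩ := h
  have hxi : ∀ v : V, v ∉ strictEn F₀ → v ∉ strictEn F := by
    intro v hv hvF
    have hvmem : v ∈ Finset.univ \ F₀.En ∪ Cn F₀ := by
      rw [mem_strictEn_iff] at hv
      push_neg at hv
      by_cases hEn : v ∈ F₀.En
      · exact Finset.mem_union_right _ (hv hEn)
      · exact Finset.mem_union_left _ (Finset.mem_sdiff.mpr ⟨Finset.mem_univ v, hEn⟩)
    have hx := satC_xi_iff.mp (H2 v hvmem)
    obtain ⟨hF, hnc⟩ := mem_strictEn_iff.mp hvF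
    apply hnc
    rw [mem_Cn_iff]
    refine ⟨hF, s v, const_of_total ?_⟩
    intro t
    rw [← doAsg_eqList_self_en t s hF]
    exact hx t
  have heta : ∀ v ∈ strictEn F₀, v ∈ strictEn F ∧ SimFn F₀ F v := by
    intro v hv
    obtain ⟨hEn₀, hnc₀⟩ := mem_strictEn_iff.mp hv
    have hE := satC_eta_iff.mp (H1 v hEn₀)
    by_cases hF : v ∈ F.En
    · have hstar : ∀ t : Asg V Val,
          F.fn v (fun w _ => t w) = F₀.fn v (fun w _ => t w) := by
        intro t
        rw [← doAsg_eqList_self_en t s hF]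
        exact hE t
      constructor
      · rw [mem_strictEn_iff]
        refine ⟨hF, fun hCn => hnc₀ ?_⟩
        obtain ⟨_, c, hc⟩ := mem_Cn_iff.mp hCn
        rw [mem_Cn_iff]
        exact ⟨hEn₀, c, const_of_total (fun t => by rw [← hstar t, hc])⟩
      · exact simFn_of_total hstar
    · exfalso
      apply hnc₀
      rw [mem_Cn_iff]
      refine ⟨hEn₀, s v, const_of_total ?_⟩
      intro t
      rw [← hE t]
      exact doAsg_eqList_self_nen t s hF
  constructor
  · apply Finset.Subset.antisymm
    · exact fun v hv => (heta v hv).1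
    · intro v hv
      by_contra hcon
      exact hxi v hcon hv
  · exact fun v hv => (heta v hv).2

/-- The formula pinning down the assignment `s₀`. -/
def eqsFml (s₀ : Asg V Val) : Fml V Val :=
  bigAnd ((Finset.univ : Finset V).toList.map (fun v => Fml.eq v (s₀ v)))

theorem isCO_eqsFml (s₀ : Asg V Val) : IsCO (eqsFml s₀) := by
  refine isCO_bigAnd ?_
  intro ψ hψ
  simp only [List.mem_map] at hψ
  obtain ⟨v, _, rfl⟩ := hψ
  exact IsCO.eq _ _

theorem satC_eqsFml {s s₀ : Asg V Val} {F : Sys V Val} :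
    satC {s} F (eqsFml s₀) ↔ s = s₀ := by
  rw [eqsFml, satC_bigAnd]
  constructor
  · intro h
    funext v
    exact satC_eq_singleton.mp
      (h _ (List.mem_map.mpr ⟨v, Finset.mem_toList.mpr (Finset.mem_univ v), rfl⟩))
  · rintro rfl ψ hψ
    simp only [List.mem_map] at hψ
    obtain ⟨v, _, rfl⟩ := hψ
    exact satC_eq_singleton.mpr rfl

theorem sys_finite : Finite (Sys V Val) := by
  let f : Sys V Val → Finset V × (V → Finset V) × ((v : V) → ((w : V) → Val w) → Val v) :=
    fun F => (F.En, F.pa, fun v g => F.fn v (fun w _ => g w))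
  have hf : Function.Injective f := by
    intro F G hFG
    obtain ⟨En₁, pa₁, fn₁, r₁⟩ := F
    obtain ⟨En₂, pa₂, fn₂, r₂⟩ := G
    simp only [f, Prod.mk.injEq] at hFG
    obtain ⟨hEn, hpa, hfn⟩ := hFG
    subst hEn
    subst hpa
    have hfn' : fn₁ = fn₂ := by
      funext v p
      obtain ⟨t, ht⟩ :=
        exists_total_ext (F := Sys.mk En₁ pa₁ fn₁ r₁) (v := v) p
      rw [← ht]
      exact congrFun (congrFun hfn v) t
    subst hfn'
    rfl
  exact Finite.of_injective f hf

end CausalTeam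

open CausalTeam

/-- **Characterization of CO-definability**: a nonempty class `K` of recursive causal
teams over σ is definable by a CO[σ]-formula iff it is flat and closed under
equivalence. -/
theorem CO_definability_characterization {V : Type} [Fintype V] [DecidableEq V] [Nonempty V]
    {Val : V → Type} [∀ v, Fintype (Val v)] [∀ v, DecidableEq (Val v)] [∀ v, Nonempty (Val v)]
    (K : Set (Set (Asg V Val) × Sys V Val))
    (hK : ∀ p ∈ K, ∀ s ∈ p.1, Compat p.2 s) (hKne : K.Nonempty) :
    (∃ φ : Fml V Val, IsCO φ ∧
        ∀ (Tm : Set (Asg V Val)) (F : Sys V Val), (∀ s ∈ Tm, Compat F s) →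
          ((Tm, F) ∈ K ↔ satC Tm F φ)) ↔
    ((∀ (Tm : Set (Asg V Val)) (F : Sys V Val), (∀ s ∈ Tm, Compat F s) →
        ((Tm, F) ∈ K ↔ ∀ s ∈ Tm, (({s} : Set (Asg V Val)), F) ∈ K)) ∧
     (∀ p ∈ K, ∀ (Tm : Set (Asg V Val)) (G : Sys V Val), (∀ s ∈ Tm, Compat G s) →
        (p.1 = Tm ∧ Sim p.2 G) → (Tm, G) ∈ K)) := by
  constructor
  · rintro ⟨φ, hCO, hdef⟩
    constructor
    · intro Tm F hcomp
      rw [hdef Tm F hcomp, satC_flat hCO]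
      refine forall₂_congr (fun s hs => ?_)
      rw [hdef {s} F (fun u hu => by
        have : u = s := hu
        rw [this]; exact hcomp s hs)]
    · rintro p hp Tm G hcomp ⟨hTm, hsim⟩
      have hcompF : ∀ s ∈ Tm, Compat p.2 s := by
        rw [← hTm]
        exact hK p hp
      have h1 : satC Tm p.2 φ := by
        rw [← hdef Tm p.2 hcompF, ← hTm, Prod.mk.eta]
        exact hp
      have h2 : satC Tm G φ :=
        (satC_sim hCO p.2 G Tm hsim (fun s hs => ⟨hcompF s hs, hcomp s hs⟩)).mp h1
      rw [hdef Tm G hcomp]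
      exact h2
  · rintro ⟨hFlat, hClosed⟩
    haveI : Finite (Sys V Val) := sys_finite
    set S : Set (Asg V Val × Sys V Val) := {q | ({q.1}, q.2) ∈ K} with hS
    have hSfin : S.Finite := Set.toFinite S
    set L : List (Asg V Val × Sys V Val) := hSfin.toFinset.toList with hL
    have hmemL : ∀ q : Asg V Val × Sys V Val, q ∈ L ↔ ({q.1}, q.2) ∈ K := by
      intro q
      rw [hL, Finset.mem_toList, Set.Finite.mem_toFinset]
      exact Iff.rfl
    have hCOall : ∀ ψ ∈ L.map (fun q => Fml.and (Phi q.2) (eqsFml q.1)), IsCO ψ := by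
      intro ψ hψ
      simp only [List.mem_map] at hψ
      obtain ⟨q, _, rfl⟩ := hψ
      exact IsCO.and (isCO_Phi q.2) (isCO_eqsFml q.1)
    have hφCO : IsCO (bigOr (L.map (fun q => Fml.and (Phi q.2) (eqsFml q.1)))) :=
      isCO_bigOr hCOall
    refine ⟨bigOr (L.map (fun q => Fml.and (Phi q.2) (eqsFml q.1))), hφCO, ?_⟩
    intro Tm F hcomp
    rw [hFlat Tm F hcomp, satC_flat hφCO Tm F]
    refine forall₂_congr (fun s hs => ?_)
    rw [satC_bigOr_singleton hCOall]
    constructor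
    · intro hmem
      refine ⟨Fml.and (Phi F) (eqsFml s), List.mem_map.mpr ⟨(s, F), ?_, rfl⟩, ?_⟩
      · exact (hmemL (s, F)).mpr hmem
      · exact ⟨satC_Phi_self (hcomp s hs), satC_eqsFml.mpr rfl⟩
    · rintro ⟨ψ, hψ, hsat⟩
      simp only [List.mem_map] at hψ
      obtain ⟨q, hqL, rfl⟩ := hψ
      have hqS : ({q.1}, q.2) ∈ K := (hmemL q).mp hqL
      obtain ⟨hphi, heqs⟩ := hsat
      have hseq : s = q.1 := satC_eqsFml.mp heqs
      have hsim : Sim q.2 F := satC_Phi_sim (hcomp s hs) hphi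
      exact hClosed ({q.1}, q.2) hqS {s} F
        (fun u hu => by
          have : u = s := hu
          rw [this]; exact hcomp s hs)
        ⟨by rw [hseq], hsim⟩
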